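/- Let T be a tree with positive edge weights, no degree-2 vertices, and at least 3 leaves, and suppose distinct leaves u, v maximize z(u,v) := d(u,v) + Σ_{x∈L(T)} d(x,p_{uv}). If x is the neighbor of u in T (which is internal), then for every neighbor s of x other than u: if s is a leaf then z(u,s) = ℓ(x), and hence ℓ(x) ≤ z(u,v). -/

import Mathlib

open SimpleGraph Finset

noncomputable section

variable {V : Type*}

/-- The weight of a walk: sum of the weights of its edges. -/
def walkWeight {G : SimpleGraph V} (w : Sym2 V → ℝ) {x y : V} (p : G.Walk x y) : ℝ :=
  (p.edges.map w).sum

/-- The unique path between two vertices of a tree. -/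
noncomputable def tpath {G : SimpleGraph V} (hT : G.IsTree) (x y : V) : G.Walk x y :=
  (hT.existsUnique_path x y).choose

/-- The weighted distance between two vertices of a tree: the weight of the unique path. -/
noncomputable def tdist {G : SimpleGraph V} (hT : G.IsTree) (w : Sym2 V → ℝ) (x y : V) : ℝ :=
  walkWeight w (tpath hT x y)

/-- The distance from a vertex `x` to a path `p`: the minimum distance from `x`
to a vertex on `p`. -/
noncomputable def distToPath {G : SimpleGraph V} (hT : G.IsTree) (w : Sym2 V → ℝ)
    (x : V) {a b : V} (p : G.Walk a b) : ℝ :=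
  sInf {r | ∃ y ∈ p.support, r = tdist hT w x y}

/-- The set of leaves of a graph. -/
def leaves (G : SimpleGraph V) [Fintype V] [DecidableRel G.Adj] : Finset V :=
  Finset.univ.filter (fun v => G.degree v = 1)

/-- The leaf-status of a vertex: the sum of its distances to all leaves. -/
noncomputable def leafStatus {G : SimpleGraph V} [Fintype V] [DecidableRel G.Adj]
    (hT : G.IsTree) (w : Sym2 V → ℝ) (u : V) : ℝ :=
  ∑ x ∈ leaves G, tdist hT w u x

/-- The leaf-status of a path: the sum of the distances of all leaves to the path. -/
noncomputable def pathLeafStatus {G : SimpleGraph V} [Fintype V] [DecidableRel G.Adj]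
    (hT : G.IsTree) (w : Sym2 V → ℝ) {a b : V} (p : G.Walk a b) : ℝ :=
  ∑ x ∈ leaves G, distToPath hT w x p

/-- `Lside hT w u v` is the set `L^{uv}_u` of leaves strictly closer to `u` than to `v`. -/
noncomputable def Lside {G : SimpleGraph V} [Fintype V] [DecidableRel G.Adj]
    (hT : G.IsTree) (w : Sym2 V → ℝ) (u v : V) : Finset V :=
  (leaves G).filter (fun x => tdist hT w x u < tdist hT w x v)

section Aux
open SimpleGraph Walk
open scoped Classical

variable {G : SimpleGraph V}

lemma walkWeight_nil (w : Sym2 V → ℝ) {x : V} : walkWeight w (Walk.nil : G.Walk x x) = 0 := by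
  simp [walkWeight]

lemma walkWeight_cons (w : Sym2 V → ℝ) {x y z : V} (h : G.Adj x y) (p : G.Walk y z) :
    walkWeight w (Walk.cons h p) = w s(x, y) + walkWeight w p := by
  simp [walkWeight]

lemma walkWeight_append (w : Sym2 V → ℝ) {x y z : V} (p : G.Walk x y) (q : G.Walk y z) :
    walkWeight w (p.append q) = walkWeight w p + walkWeight w q := by
  simp [walkWeight, Walk.edges_append]

lemma walkWeight_reverse (w : Sym2 V → ℝ) {x y : V} (p : G.Walk x y) :
    walkWeight w p.reverse = walkWeight w p := by
  simp [walkWeight, Walk.edges_reverse]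

lemma walkWeight_concat (w : Sym2 V → ℝ) {x y z : V} (p : G.Walk x y) (h : G.Adj y z) :
    walkWeight w (p.concat h) = walkWeight w p + w s(y, z) := by
  simp [Walk.concat_eq_append, walkWeight_append, walkWeight_cons, walkWeight_nil]

lemma walkWeight_nonneg {w : Sym2 V → ℝ} (hw : ∀ e ∈ G.edgeSet, 0 < w e) {x y : V}
    (p : G.Walk x y) : 0 ≤ walkWeight w p := by
  induction p with
  | nil => simp [walkWeight]
  | cons h p ih =>
      rw [walkWeight_cons]
      have := hw _ ((SimpleGraph.mem_edgeSet G).mpr h) 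
      linarith

variable {hT : G.IsTree} {w : Sym2 V → ℝ}

lemma tpath_isPath (hT : G.IsTree) (x y : V) : (tpath hT x y).IsPath :=
  (hT.existsUnique_path x y).choose_spec.1

lemma tpath_unique (hT : G.IsTree) {x y : V} (p : G.Walk x y) (hp : p.IsPath) :
    p = tpath hT x y :=
  (hT.existsUnique_path x y).choose_spec.2 p hp

lemma tpath_self (hT : G.IsTree) (x : V) : tpath hT x x = Walk.nil :=
  (tpath_unique hT Walk.nil Walk.IsPath.nil).symm

lemma tdist_self (hT : G.IsTree) (w : Sym2 V → ℝ) (x : V) : tdist hT w x x = 0 := by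
  rw [tdist, tpath_self, walkWeight_nil]

lemma tpath_comm (hT : G.IsTree) (x y : V) : tpath hT y x = (tpath hT x y).reverse :=
  (tpath_unique hT _ (tpath_isPath hT x y).reverse).symm

lemma tdist_comm (hT : G.IsTree) (w : Sym2 V → ℝ) (x y : V) :
    tdist hT w x y = tdist hT w y x := by
  rw [tdist, tdist, tpath_comm hT x y, walkWeight_reverse]

lemma tdist_nonneg (hT : G.IsTree) {w : Sym2 V → ℝ} (hw : ∀ e ∈ G.edgeSet, 0 < w e)
    (x y : V) : 0 ≤ tdist hT w x y :=
  walkWeight_nonneg hw _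

lemma tpath_adj (hT : G.IsTree) {x y : V} (h : G.Adj x y) :
    tpath hT x y = Walk.cons h Walk.nil := by
  refine (tpath_unique hT _ ?_).symm
  rw [Walk.isPath_def]
  simp [h.ne]

lemma tdist_adj (hT : G.IsTree) (w : Sym2 V → ℝ) {x y : V} (h : G.Adj x y) :
    tdist hT w x y = w s(x, y) := by
  rw [tdist, tpath_adj hT h, walkWeight_cons, walkWeight_nil, add_zero]

lemma tdist_pos (hT : G.IsTree) {w : Sym2 V → ℝ} (hw : ∀ e ∈ G.edgeSet, 0 < w e)
    {x y : V} (hxy : x ≠ y) : 0 < tdist hT w x y := by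
  rw [tdist]
  generalize hp : tpath hT x y = p
  cases p with
  | nil => exact absurd rfl hxy
  | cons h q =>
      rw [walkWeight_cons]
      have h1 := hw _ ((SimpleGraph.mem_edgeSet G).mpr h)
      have h2 := walkWeight_nonneg hw q
      linarith

lemma tdist_split (hT : G.IsTree) (w : Sym2 V → ℝ) {x y z : V}
    (hz : z ∈ (tpath hT x y).support) :
    tdist hT w x y = tdist hT w x z + tdist hT w z y := by
  have hsp := tpath_isPath hT x y
  have h1 : ((tpath hT x y).takeUntil z hz) = tpath hT x z :=
    tpath_unique hT _ (hsp.takeUntil hz)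
  have h2 : ((tpath hT x y).dropUntil z hz) = tpath hT z y :=
    tpath_unique hT _ (hsp.dropUntil hz)
  have h3 := Walk.take_spec (tpath hT x y) hz
  conv_lhs => rw [tdist, ← h3]
  rw [walkWeight_append, h1, h2, tdist, tdist]

lemma tpath_concat (hT : G.IsTree) {x y m : V} (h : G.Adj y m)
    (hm : m ∉ (tpath hT x y).support) :
    tpath hT x m = (tpath hT x y).concat h := by
  refine (tpath_unique hT _ ?_).symm
  rw [Walk.concat_eq_append]
  -- path: append of path and single edge, with m not in support
  have : ((tpath hT x y).concat h).reverse.IsPath := by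
    rw [Walk.reverse_concat]
    exact (tpath_isPath hT x y).reverse.cons (by rwa [Walk.support_reverse, List.mem_reverse])
  rw [← Walk.concat_eq_append]
  have := this.reverse
  rwa [Walk.reverse_reverse] at this

lemma tdist_concat (hT : G.IsTree) (w : Sym2 V → ℝ) {x y m : V} (h : G.Adj y m)
    (hm : m ∉ (tpath hT x y).support) :
    tdist hT w x m = tdist hT w x y + w s(y, m) := by
  rw [tdist, tpath_concat hT h hm, walkWeight_concat, tdist]

lemma support_split_nbr (hT : G.IsTree) {y q m : V} (h : G.Adj m q)
    (hm : m ∈ (tpath hT y q).support) :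
    (tpath hT y q).support = (tpath hT y m).support ++ [q] := by
  have hsp := tpath_isPath hT y q
  have h1 : (tpath hT y q).takeUntil m hm = tpath hT y m :=
    tpath_unique hT _ (hsp.takeUntil hm)
  have h2 : (tpath hT y q).dropUntil m hm = tpath hT m q :=
    tpath_unique hT _ (hsp.dropUntil hm)
  have h3 : tpath hT m q = Walk.cons h Walk.nil := tpath_adj hT h
  conv_lhs => rw [← Walk.take_spec (tpath hT y q) hm]
  rw [Walk.support_append, h1, h2, h3]
  simp

lemma nbr_unique (hT : G.IsTree) {w : Sym2 V → ℝ} (hw : ∀ e ∈ G.edgeSet, 0 < w e)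
    {y q m m' : V} (h : G.Adj q m) (h' : G.Adj q m')
    (hm : m ∈ (tpath hT y q).support) (hm' : m' ∈ (tpath hT y q).support) : m = m' := by
  by_contra hne
  have hm'2 : m' ∈ (tpath hT y m).support := by
    rw [support_split_nbr hT h.symm hm] at hm'
    rcases List.mem_append.mp hm' with h0 | h0
    · exact h0
    · exact absurd (List.mem_singleton.mp h0) h'.ne'
  have hm2 : m ∈ (tpath hT y m').support := by
    rw [support_split_nbr hT h'.symm hm'] at hm
    rcases List.mem_append.mp hm with h0 | h0
    · exact h0
    · exact absurd (List.mem_singleton.mp h0) h.ne'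
  have e1 := tdist_split hT w hm'2
  have e2 := tdist_split hT w hm2
  have p1 := tdist_pos hT hw hne
  have p2 := tdist_pos hT hw (Ne.symm hne)
  linarith

lemma leaf_nbr_eq {u x r : V} [Fintype V] [DecidableRel G.Adj]
    (hu : G.degree u = 1) (h1 : G.Adj u x) (h2 : G.Adj u r) : r = x := by
  have := Finset.card_le_one.mp (le_of_eq hu)
  exact this r ((G.mem_neighborFinset u r).mpr h2) x ((G.mem_neighborFinset u x).mpr h1)

lemma leaf_path_through_nbr [Fintype V] [DecidableRel G.Adj] (hT : G.IsTree)
    {u x y : V} (hu : G.degree u = 1) (hx : G.Adj u x) (hy : y ≠ u) :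
    x ∈ (tpath hT y u).support := by
  obtain ⟨r, hr, q, hq⟩ := Walk.exists_eq_cons_of_ne (Ne.symm hy) (tpath hT u y)
  have hrx : r = x := leaf_nbr_eq hu hx hr
  have : x ∈ (tpath hT u y).support := by
    rw [hq, Walk.support_cons]
    exact List.mem_cons_of_mem _ (hrx ▸ q.start_mem_support)
  rw [tpath_comm hT u y, Walk.support_reverse]
  exact List.mem_reverse.mpr this

lemma leaf_tdist [Fintype V] [DecidableRel G.Adj] (hT : G.IsTree) (w : Sym2 V → ℝ)
    {u x y : V} (hu : G.degree u = 1) (hx : G.Adj u x) (hy : y ≠ u) :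
    tdist hT w y u = tdist hT w y x + w s(x, u) := by
  have hmem := leaf_path_through_nbr hT hu hx hy
  rw [tdist_split hT w hmem, tdist_adj hT w hx.symm]

lemma distToPath_le [Fintype V] (hT : G.IsTree) (w : Sym2 V → ℝ) {x a b : V}
    (p : G.Walk a b) {y : V} (hy : y ∈ p.support) :
    distToPath hT w x p ≤ tdist hT w x y := by
  apply csInf_le
  · apply Set.Finite.bddBelow
    apply Set.Finite.subset (Set.finite_range (tdist hT w x))
    rintro r ⟨z, hz, rfl⟩
    exact ⟨z, rfl⟩
  · exact ⟨y, hy, rfl⟩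

lemma le_distToPath (hT : G.IsTree) (w : Sym2 V → ℝ) {x a b : V}
    (p : G.Walk a b) {c : ℝ} (h : ∀ y ∈ p.support, c ≤ tdist hT w x y) :
    c ≤ distToPath hT w x p := by
  apply le_csInf
  · exact ⟨tdist hT w x a, a, p.start_mem_support, rfl⟩
  · rintro r ⟨z, hz, rfl⟩
    exact h z hz

lemma distToPath_eq [Fintype V] (hT : G.IsTree) (w : Sym2 V → ℝ) {x a b : V}
    (p : G.Walk a b) {y : V} (hy : y ∈ p.support)
    (hmin : ∀ z ∈ p.support, tdist hT w x y ≤ tdist hT w x z) :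
    distToPath hT w x p = tdist hT w x y :=
  le_antisymm (distToPath_le hT w p hy) (le_distToPath hT w p hmin)

lemma cherry_tpath (hT : G.IsTree) {c s1 s2 : V} (h1 : G.Adj s1 c) (h2 : G.Adj c s2)
    (hne : s1 ≠ s2) : tpath hT s1 s2 = Walk.cons h1 (Walk.cons h2 Walk.nil) := by
  refine (tpath_unique hT _ ?_).symm
  rw [Walk.isPath_def]
  simp [h1.ne, h2.ne, hne]

lemma mem_leaves_iff [Fintype V] [DecidableRel G.Adj] {y : V} :
    y ∈ leaves G ↔ G.degree y = 1 := by
  simp [leaves]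

lemma cherry_z [Fintype V] [DecidableRel G.Adj] (hT : G.IsTree) {w : Sym2 V → ℝ}
    (hw : ∀ e ∈ G.edgeSet, 0 < w e) {c s1 s2 : V}
    (hs1 : s1 ∈ leaves G) (hs2 : s2 ∈ leaves G)
    (h1 : G.Adj c s1) (h2 : G.Adj c s2) (hne : s1 ≠ s2) :
    tdist hT w s1 s2 + pathLeafStatus hT w (tpath hT s1 s2) = leafStatus hT w c := by
  have hp : tpath hT s1 s2 = Walk.cons h1.symm (Walk.cons h2 Walk.nil) :=
    cherry_tpath hT h1.symm h2 hne
  have hsupp : (tpath hT s1 s2).support = [s1, c, s2] := by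
    rw [hp]; simp
  -- distToPath values
  have hd1 : distToPath hT w s1 (tpath hT s1 s2) = 0 := by
    have h0 := distToPath_le hT w (tpath hT s1 s2) (x := s1)
      (y := s1) (by rw [hsupp]; simp)
    rw [tdist_self] at h0
    have h0' := le_distToPath hT w (tpath hT s1 s2) (x := s1) (c := 0)
      (fun z _ => tdist_nonneg hT hw s1 z)
    linarith
  have hd2 : distToPath hT w s2 (tpath hT s1 s2) = 0 := by
    have h0 := distToPath_le hT w (tpath hT s1 s2) (x := s2)
      (y := s2) (by rw [hsupp]; simp)
    rw [tdist_self] at h0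
    have h0' := le_distToPath hT w (tpath hT s1 s2) (x := s2) (c := 0)
      (fun z _ => tdist_nonneg hT hw s2 z)
    linarith
  have hdm : ∀ y ∈ ((leaves G).erase s1).erase s2,
      distToPath hT w y (tpath hT s1 s2) = tdist hT w c y := by
    intro y hy
    have hy2 : y ≠ s2 := (Finset.mem_erase.mp hy).1
    have hy1 : y ≠ s1 := (Finset.mem_erase.mp ((Finset.mem_erase.mp hy).2)).1
    rw [tdist_comm hT w c y]
    apply distToPath_eq hT w _ (by rw [hsupp]; simp)
    intro z hz
    rw [hsupp] at hz
    have e1 : tdist hT w y s1 = tdist hT w y c + w s(c, s1) :=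
      leaf_tdist hT w (mem_leaves_iff.mp hs1) h1.symm hy1
    have e2 : tdist hT w y s2 = tdist hT w y c + w s(c, s2) :=
      leaf_tdist hT w (mem_leaves_iff.mp hs2) h2.symm hy2
    have w1 : 0 < w s(c, s1) := hw _ ((SimpleGraph.mem_edgeSet G).mpr h1)
    have w2 : 0 < w s(c, s2) := hw _ ((SimpleGraph.mem_edgeSet G).mpr h2)
    simp only [List.mem_cons, List.mem_singleton, List.not_mem_nil, or_false] at hz
    rcases hz with rfl | rfl | rfl
    · linarith
    · linarith
    · linarith
  -- tdist values
  have ht12 : tdist hT w s1 s2 = w s(s1, c) + w s(c, s2) := by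
    rw [tdist, hp, walkWeight_cons, walkWeight_cons, walkWeight_nil, add_zero]
  have htc1 : tdist hT w c s1 = w s(s1, c) := by
    rw [tdist_adj hT w h1, Sym2.eq_swap]
  have htc2 : tdist hT w c s2 = w s(c, s2) := tdist_adj hT w h2
  -- assemble sums
  have hs2' : s2 ∈ (leaves G).erase s1 := Finset.mem_erase.mpr ⟨hne.symm, hs2⟩
  rw [pathLeafStatus, leafStatus]
  rw [← Finset.add_sum_erase _ _ hs1, ← Finset.add_sum_erase _ _ hs2']
  rw [← Finset.add_sum_erase _ (fun y => tdist hT w c y) hs1,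
    ← Finset.add_sum_erase _ (fun y => tdist hT w c y) hs2']
  rw [Finset.sum_congr rfl hdm, hd1, hd2, ht12, htc1, htc2]
  ring

noncomputable def Sset [Fintype V] [DecidableRel G.Adj] (hT : G.IsTree) (q m : V) : Finset V :=
  (leaves G).filter (fun y => m ∈ (tpath hT y q).support)

lemma mem_Sset [Fintype V] [DecidableRel G.Adj] {hT : G.IsTree} {q m y : V} :
    y ∈ Sset hT q m ↔ y ∈ leaves G ∧ m ∈ (tpath hT y q).support := by
  simp [Sset]

lemma Sset_disjoint [Fintype V] [DecidableRel G.Adj] (hT : G.IsTree) {w : Sym2 V → ℝ}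
    (hw : ∀ e ∈ G.edgeSet, 0 < w e) {q m m' : V} (h : G.Adj q m) (h' : G.Adj q m')
    (hne : m ≠ m') : Disjoint (Sset hT q m) (Sset hT q m') := by
  rw [Finset.disjoint_left]
  intro y hy hy'
  exact hne (nbr_unique hT hw h h' (mem_Sset.mp hy).2 (mem_Sset.mp hy').2)

lemma Sset_subset [Fintype V] [DecidableRel G.Adj] (hT : G.IsTree) {w : Sym2 V → ℝ}
    (hw : ∀ e ∈ G.edgeSet, 0 < w e) {b q m : V} (hb : G.Adj b q) (hm : G.Adj q m)
    (hmb : m ≠ b) : Sset hT q m ⊆ Sset hT b q := by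
  intro y hy
  obtain ⟨hyL, hymem⟩ := mem_Sset.mp hy
  refine mem_Sset.mpr ⟨hyL, ?_⟩
  by_contra hq
  have hcat := tpath_concat hT hb hq
  have hmsup : m ∈ (tpath hT y q).support := hymem
  have hbsup : b ∈ (tpath hT y q).support := by
    rw [hcat, Walk.support_concat]
    exact List.mem_append_left _ ((tpath hT y b).end_mem_support)
  exact hmb (nbr_unique hT hw hm hb.symm hmsup hbsup)

lemma Sset_nonempty [Fintype V] [DecidableRel G.Adj] (hT : G.IsTree) {w : Sym2 V → ℝ}
    (hw : ∀ e ∈ G.edgeSet, 0 < w e) {q m : V} (h : G.Adj q m) :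
    (Sset hT q m).Nonempty := by
  classical
  set T : Finset V := Finset.univ.filter (fun z => m ∈ (tpath hT z q).support) with hT'
  have hmT : m ∈ T := by
    simp only [hT', Finset.mem_filter, Finset.mem_univ, true_and]
    exact (tpath hT m q).start_mem_support
  obtain ⟨y, hyT, hmax⟩ := T.exists_max_image (fun z => tdist hT w z q) ⟨m, hmT⟩
  have hymem : m ∈ (tpath hT y q).support := by
    simpa [hT', Finset.mem_filter] using hyT
  have hyq : y ≠ q := by
    intro h0
    have hx := hymem
    rw [h0, tpath_self] at hx
    simp at hx
    exact h.ne' hx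
  obtain ⟨r, hr, q', hq'⟩ := Walk.exists_eq_cons_of_ne hyq (tpath hT y q)
  -- every neighbor of y equals r
  have hnb : ∀ r' : V, G.Adj y r' → r' = r := by
    intro r' hr'
    by_cases hmem : r' ∈ (tpath hT y q).support
    · -- both r and r' are neighbors of y in the support of the path from q to y
      have hrev : ∀ z : V, z ∈ (tpath hT y q).support → z ∈ (tpath hT q y).support := by
        intro z hz
        rw [tpath_comm hT y q, Walk.support_reverse]
        exact List.mem_reverse.mpr hz
      have hrs : r ∈ (tpath hT y q).support := by
        rw [hq', Walk.support_cons]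
        exact List.mem_cons_of_mem _ q'.start_mem_support
      exact nbr_unique hT hw hr' hr (hrev _ hmem) (hrev _ hrs)
    · -- extending the path contradicts maximality
      exfalso
      have hpath : (Walk.cons hr'.symm (tpath hT y q)).IsPath :=
        (tpath_isPath hT y q).cons hmem
      have htp : tpath hT r' q = Walk.cons hr'.symm (tpath hT y q) :=
        (tpath_unique hT _ hpath).symm
      have hr'T : r' ∈ T := by
        simp only [hT', Finset.mem_filter, Finset.mem_univ, true_and, htp, Walk.support_cons]
        exact List.mem_cons_of_mem _ hymem
      have hle := hmax r' hr'T
      have : tdist hT w r' q = w s(r', y) + tdist hT w y q := by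
        rw [tdist, htp, walkWeight_cons, tdist]
      have hwpos : 0 < w s(r', y) := hw _ ((SimpleGraph.mem_edgeSet G).mpr hr'.symm)
      linarith
  have hdeg : G.degree y = 1 := by
    rw [← SimpleGraph.card_neighborFinset_eq_degree]
    rw [Finset.card_eq_one]
    refine ⟨r, ?_⟩
    ext z
    simp only [SimpleGraph.mem_neighborFinset, Finset.mem_singleton]
    constructor
    · exact hnb z
    · rintro rfl; exact hr
  exact ⟨y, mem_Sset.mpr ⟨mem_leaves_iff.mpr hdeg, hymem⟩⟩

lemma leafStatus_diff [Fintype V] [DecidableRel G.Adj] (hT : G.IsTree) (w : Sym2 V → ℝ)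
    {q m : V} (hq : q ∉ leaves G) (h : G.Adj q m) :
    leafStatus hT w m = leafStatus hT w q +
      w s(q, m) * (((leaves G).card : ℝ) - 2 * ((Sset hT q m).card : ℝ)) := by
  classical
  set L := leaves G with hL
  set P : V → Prop := fun y => m ∈ (tpath hT y q).support with hP
  have key : ∀ y ∈ L, tdist hT w m y =
      tdist hT w q y + (if P y then -w s(q, m) else w s(q, m)) := by
    intro y hyL
    have hyq : y ≠ q := fun h0 => hq (h0 ▸ hyL)
    by_cases hPy : P y
    · have e1 : tdist hT w y q = tdist hT w y m + tdist hT w m q := tdist_split hT w hPy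
      have e2 : tdist hT w m q = w s(q, m) := by
        rw [tdist_comm hT w m q, tdist_adj hT w h]
      rw [if_pos hPy, tdist_comm hT w m y, tdist_comm hT w q y]
      linarith
    · have e1 : tdist hT w y m = tdist hT w y q + w s(q, m) := tdist_concat hT w h hPy
      rw [if_neg hPy, tdist_comm hT w m y, tdist_comm hT w q y]
      linarith
  have hsum : leafStatus hT w m = leafStatus hT w q +
      ∑ y ∈ L, (if P y then -w s(q, m) else w s(q, m)) := by
    rw [leafStatus, leafStatus, ← Finset.sum_add_distrib]
    exact Finset.sum_congr rfl key
  have hsplit : ∑ y ∈ L, (if P y then -w s(q, m) else w s(q, m)) =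
      ((L.filter P).card : ℝ) * (-w s(q, m)) +
      ((L.filter (fun y => ¬ P y)).card : ℝ) * w s(q, m) := by
    rw [← Finset.sum_filter_add_sum_filter_not L P]
    congr 1
    · rw [Finset.sum_congr rfl (fun y hy => if_pos (Finset.mem_filter.mp hy).2),
        Finset.sum_const, nsmul_eq_mul]
    · rw [Finset.sum_congr rfl (fun y hy => if_neg (Finset.mem_filter.mp hy).2),
        Finset.sum_const, nsmul_eq_mul]
  have hcard : (L.filter P).card + (L.filter (fun y => ¬ P y)).card = L.card :=
    Finset.card_filter_add_card_filter_not _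
  have hSc : (Sset hT q m).card = (L.filter P).card := rfl
  have hcardR : ((L.filter (fun y => ¬ P y)).card : ℝ) =
      (L.card : ℝ) - ((L.filter P).card : ℝ) := by
    have := hcard
    push_cast [← this]
    ring
  rw [hsum, hsplit, hSc, hcardR]
  ring

lemma leafStatus_mono [Fintype V] [DecidableRel G.Adj] (hT : G.IsTree) {w : Sym2 V → ℝ}
    (hw : ∀ e ∈ G.edgeSet, 0 < w e) {q m : V} (hq : q ∉ leaves G) (h : G.Adj q m)
    (hc : 2 * (Sset hT q m).card ≤ (leaves G).card) :
    leafStatus hT w q ≤ leafStatus hT w m := by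
  rw [leafStatus_diff hT w hq h]
  have hwpos : 0 < w s(q, m) := hw _ ((SimpleGraph.mem_edgeSet G).mpr h)
  have : (0 : ℝ) ≤ ((leaves G).card : ℝ) - 2 * ((Sset hT q m).card : ℝ) := by
    have h2 : ((2 * (Sset hT q m).card : ℕ) : ℝ) ≤ (((leaves G).card : ℕ) : ℝ) :=
      Nat.cast_le.mpr hc
    push_cast at h2
    linarith
  nlinarith

lemma three_le_degree [Fintype V] [DecidableRel G.Adj] (hdeg : ∀ x : V, G.degree x ≠ 2)
    {q m : V} (hq : q ∉ leaves G) (h : G.Adj q m) : 3 ≤ G.degree q := by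
  have h1 : 0 < G.degree q := by
    rw [← SimpleGraph.card_neighborFinset_eq_degree, Finset.card_pos]
    exact ⟨m, (G.mem_neighborFinset q m).mpr h⟩
  have h2 : G.degree q ≠ 1 := fun h0 => hq (mem_leaves_iff.mpr h0)
  have h3 := hdeg q
  omega

lemma descent [Fintype V] [DecidableRel G.Adj] (hT : G.IsTree) {w : Sym2 V → ℝ}
    (hw : ∀ e ∈ G.edgeSet, 0 < w e) (hdeg : ∀ x : V, G.degree x ≠ 2) :
    ∀ n : ℕ, ∀ b q : V, G.Adj b q → q ∉ leaves G →
    2 * (Sset hT b q).card ≤ (leaves G).card → (Sset hT b q).card ≤ n →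
    ∃ c s1 s2 : V, G.Adj c s1 ∧ G.Adj c s2 ∧ s1 ≠ s2 ∧ s1 ∈ leaves G ∧ s2 ∈ leaves G ∧
      leafStatus hT w q ≤ leafStatus hT w c := by
  intro n
  induction n with
  | zero =>
      intro b q hb hq _ hn
      exact absurd hn (by
        have := (Sset_nonempty hT hw hb).card_pos
        omega)
  | succ n ih =>
      intro b q hb hq hc hn
      by_cases hch : ∃ s1 s2 : V, G.Adj q s1 ∧ G.Adj q s2 ∧ s1 ≠ s2 ∧
          s1 ∈ leaves G ∧ s2 ∈ leaves G
      · obtain ⟨s1, s2, a1, a2, hne, l1, l2⟩ := hch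
        exact ⟨q, s1, s2, a1, a2, hne, l1, l2, le_refl _⟩
      · have hdq : 3 ≤ G.degree q := three_le_degree hdeg hq hb.symm
        have hbmem : (G.neighborFinset q).card = G.degree q := rfl
        have h2 : 1 < ((G.neighborFinset q).erase b).card := by
          have := Finset.pred_card_le_card_erase (s := G.neighborFinset q) (a := b)
          omega
        obtain ⟨m1, hm1, m2, hm2, hm12⟩ := Finset.one_lt_card.mp h2
        have hm1b : m1 ≠ b := (Finset.mem_erase.mp hm1).1
        have hm2b : m2 ≠ b := (Finset.mem_erase.mp hm2).1
        have ha1 : G.Adj q m1 :=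
          (G.mem_neighborFinset q m1).mp (Finset.mem_of_mem_erase hm1)
        have ha2 : G.Adj q m2 :=
          (G.mem_neighborFinset q m2).mp (Finset.mem_of_mem_erase hm2)
        -- pick an internal one among m1 m2
        have hpick : ∃ m m' : V, G.Adj q m ∧ G.Adj q m' ∧ m ≠ m' ∧ m ≠ b ∧ m' ≠ b ∧
            m ∉ leaves G := by
          by_cases hl1 : m1 ∈ leaves G
          · by_cases hl2 : m2 ∈ leaves G
            · exact absurd ⟨m1, m2, ha1, ha2, hm12, hl1, hl2⟩ hch
            · exact ⟨m2, m1, ha2, ha1, hm12.symm, hm2b, hm1b, hl2⟩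
          · exact ⟨m1, m2, ha1, ha2, hm12, hm1b, hm2b, hl1⟩
        obtain ⟨m, m', ham, ham', hmm', hmb, hm'b, hml⟩ := hpick
        have hsub : Sset hT q m ⊆ Sset hT b q := Sset_subset hT hw hb ham hmb
        have hsub' : Sset hT q m' ⊆ Sset hT b q := Sset_subset hT hw hb ham' hm'b
        have hdisj : Disjoint (Sset hT q m) (Sset hT q m') :=
          Sset_disjoint hT hw ham ham' hmm'
        have hne' : 0 < (Sset hT q m').card := (Sset_nonempty hT hw ham').card_pos
        have hlt : (Sset hT q m).card < (Sset hT b q).card := by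
          have hu : (Sset hT q m ∪ Sset hT q m').card =
              (Sset hT q m).card + (Sset hT q m').card :=
            Finset.card_union_of_disjoint hdisj
          have hle : (Sset hT q m ∪ Sset hT q m').card ≤ (Sset hT b q).card :=
            Finset.card_le_card (Finset.union_subset hsub hsub')
          omega
        have hrec := ih q m ham hml (by omega) (by omega)
        obtain ⟨c, s1, s2, a1, a2, hne, l1, l2, hlc⟩ := hrec
        refine ⟨c, s1, s2, a1, a2, hne, l1, l2, ?_⟩
        have hmono : leafStatus hT w q ≤ leafStatus hT w m :=
          leafStatus_mono hT hw hq ham (by omega)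
        linarith

end Aux

/-- if distinct leaves `u, v` maximize `z`, and `x` is the
neighbor of `u`, then every leaf neighbor `s ≠ u` of `x` satisfies
`z(u,s) = ℓ(x)`, and hence `ℓ(x) ≤ z(u,v)`. -/
theorem stmt16 {V : Type*} [Fintype V] {G : SimpleGraph V} [DecidableRel G.Adj]
    (hT : G.IsTree) (w : Sym2 V → ℝ) (hw : ∀ e ∈ G.edgeSet, 0 < w e)
    (hdeg : ∀ x : V, G.degree x ≠ 2) (hL : 3 ≤ (leaves G).card)
    (u v : V) (hu : u ∈ leaves G) (hv : v ∈ leaves G) (huv : u ≠ v)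
    (hmax : ∀ a ∈ leaves G, ∀ b ∈ leaves G, a ≠ b →
      tdist hT w a b + pathLeafStatus hT w (tpath hT a b) ≤
        tdist hT w u v + pathLeafStatus hT w (tpath hT u v))
    (x : V) (hux : G.Adj u x) :
    (∀ s : V, G.Adj x s → s ≠ u → s ∈ leaves G →
      tdist hT w u s + pathLeafStatus hT w (tpath hT u s) = leafStatus hT w x) ∧
    leafStatus hT w x ≤
      tdist hT w u v + pathLeafStatus hT w (tpath hT u v) := by
  classical
  have partA : ∀ s : V, G.Adj x s → s ≠ u → s ∈ leaves G →
      tdist hT w u s + pathLeafStatus hT w (tpath hT u s) = leafStatus hT w x :=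
    fun s hs hsu hsl => cherry_z hT hw hu hsl hux.symm hs (Ne.symm hsu)
  refine ⟨partA, ?_⟩
  -- x is internal
  have hxl : x ∉ leaves G := by
    intro hxl
    have hy : ∃ y ∈ leaves G, y ≠ u ∧ y ≠ x := by
      by_contra hcon
      push_neg at hcon
      have hsub : leaves G ⊆ ({u, x} : Finset V) := by
        intro y hy
        rcases Classical.em (y = u) with h0 | h0
        · simp [h0]
        · rcases Classical.em (y = x) with h1 | h1
          · simp [h1]
          · exact absurd (hcon y hy h0) h1
      have := Finset.card_le_card hsub
      have h2 : ({u, x} : Finset V).card ≤ 2 := Finset.card_insert_le _ _ |>.trans (by simp)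
      omega
    obtain ⟨y, hyl, hyu, hyx⟩ := hy
    have e1 : tdist hT w y u = tdist hT w y x + w s(x, u) :=
      leaf_tdist hT w (mem_leaves_iff.mp hu) hux hyu
    have e2 : tdist hT w y x = tdist hT w y u + w s(u, x) :=
      leaf_tdist hT w (mem_leaves_iff.mp hxl) hux.symm hyx
    have hwp : 0 < w s(u, x) := hw _ ((SimpleGraph.mem_edgeSet G).mpr hux)
    rw [Sym2.eq_swap] at e2 hwp
    linarith
  by_cases hsx : ∃ s : V, G.Adj x s ∧ s ≠ u ∧ s ∈ leaves G
  · obtain ⟨s, h1, h2, h3⟩ := hsx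
    have hzA := partA s h1 h2 h3
    have := hmax u hu s h3 (Ne.symm h2)
    linarith
  · push_neg at hsx
    -- two distinct neighbors of x other than u
    have hdx : 3 ≤ G.degree x := three_le_degree hdeg hxl hux.symm
    have h2 : 1 < ((G.neighborFinset x).erase u).card := by
      have := Finset.pred_card_le_card_erase (s := G.neighborFinset x) (a := u)
      have hbm : (G.neighborFinset x).card = G.degree x := rfl
      omega
    obtain ⟨m1, hm1, m2, hm2, hm12⟩ := Finset.one_lt_card.mp h2
    have hm1u : m1 ≠ u := (Finset.mem_erase.mp hm1).1
    have hm2u : m2 ≠ u := (Finset.mem_erase.mp hm2).1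
    have ha1 : G.Adj x m1 := (G.mem_neighborFinset x m1).mp (Finset.mem_of_mem_erase hm1)
    have ha2 : G.Adj x m2 := (G.mem_neighborFinset x m2).mp (Finset.mem_of_mem_erase hm2)
    have hl1 : m1 ∉ leaves G := fun h0 => (hsx m1 ha1 hm1u) h0
    have hl2 : m2 ∉ leaves G := fun h0 => (hsx m2 ha2 hm2u) h0
    have hdisj : Disjoint (Sset hT x m1) (Sset hT x m2) :=
      Sset_disjoint hT hw ha1 ha2 hm12
    have hcards : (Sset hT x m1).card + (Sset hT x m2).card ≤ (leaves G).card := by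
      have hu1 : Sset hT x m1 ⊆ leaves G := Finset.filter_subset _ _
      have hu2 : Sset hT x m2 ⊆ leaves G := Finset.filter_subset _ _
      have := Finset.card_union_of_disjoint hdisj
      have hle : (Sset hT x m1 ∪ Sset hT x m2).card ≤ (leaves G).card :=
        Finset.card_le_card (Finset.union_subset hu1 hu2)
      omega
    have hpick : ∃ m : V, G.Adj x m ∧ m ∉ leaves G ∧
        2 * (Sset hT x m).card ≤ (leaves G).card := by
      rcases Classical.em (2 * (Sset hT x m1).card ≤ (leaves G).card) with h0 | h0
      · exact ⟨m1, ha1, hl1, h0⟩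
      · exact ⟨m2, ha2, hl2, by omega⟩
    obtain ⟨m, ham, hml, hmc⟩ := hpick
    obtain ⟨c, s1, s2, a1, a2, hne, l1, l2, hlc⟩ :=
      descent hT hw hdeg (Sset hT x m).card x m ham hml hmc (le_refl _)
    have hmono : leafStatus hT w x ≤ leafStatus hT w m :=
      leafStatus_mono hT hw hxl ham hmc
    have hcz : tdist hT w s1 s2 + pathLeafStatus hT w (tpath hT s1 s2) = leafStatus hT w c :=
      cherry_z hT hw l1 l2 a1 a2 hne
    have hmx := hmax s1 l1 s2 l2 hne
    linarith
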